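/- If f : {0,1}^b → {0,1} is in standard form, and p_f(μ) is the univariate polynomial obtained by substituting x_i = μ for all i into the multilinear extension of f, then: (1) deg(p_f) ≤ deg(f); (2) 0 ≤ p_f(μ) ≤ 1 for all μ ∈ [0,1]; and (3) |p_f''(0)| ≥ b(b−1). -/

import Mathlib

open Finset
open scoped Classical

namespace BF

noncomputable section

/-- flip the bits of `x` belonging to `B`. -/
def flipS {n : ℕ} (x : Fin n → Bool) (B : Finset (Fin n)) : Fin n → Bool :=
  fun i => if i ∈ B then !(x i) else x i

/-- flip the `i`-th bit of `x`. -/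
def flip1 {n : ℕ} (x : Fin n → Bool) (i : Fin n) : Fin n → Bool :=
  fun j => if j = i then !(x j) else x j

/-- real value of a boolean. -/
def bval (b : Bool) : ℝ := if b then 1 else 0

/-- coefficient of the monomial `∏_{i ∈ S} x_i` in the unique multilinear
real polynomial expansion of `f` (Möbius inversion over the subcube lattice). -/
def coeffS {n : ℕ} (f : (Fin n → Bool) → ℝ) (S : Finset (Fin n)) : ℝ :=
  ∑ T ∈ S.powerset, (-1 : ℝ) ^ (S.card - T.card) * f (fun i => decide (i ∈ T))

/-- degree of the multilinear expansion of a real-valued function on the cube. -/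
def degF {n : ℕ} (f : (Fin n → Bool) → ℝ) : ℕ :=
  (Finset.univ.filter fun S : Finset (Fin n) => coeffS f S ≠ 0).sup Finset.card

/-- degree of a boolean function. -/
def degB {n : ℕ} (f : (Fin n → Bool) → Bool) : ℕ := degF (fun x => bval (f x))

/-- block sensitivity of `f` at `x`. -/
def bsAt {n : ℕ} (f : (Fin n → Bool) → Bool) (x : Fin n → Bool) : ℕ :=
  (Finset.univ.filter fun 𝓑 : Finset (Finset (Fin n)) =>
      (∀ B ∈ 𝓑, f (flipS x B) ≠ f x) ∧
      ∀ A ∈ 𝓑, ∀ B ∈ 𝓑, A ≠ B → Disjoint A B).sup Finset.card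

/-- block sensitivity of `f`. -/
def bs {n : ℕ} (f : (Fin n → Bool) → Bool) : ℕ := Finset.univ.sup (bsAt f)

/-- sensitivity of `f` at `x`. -/
def sx {n : ℕ} (f : (Fin n → Bool) → Bool) (x : Fin n → Bool) : ℕ :=
  (Finset.univ.filter fun i => f (flip1 x i) ≠ f x).card

/-- (maximum) sensitivity of `f`. -/
def sens {n : ℕ} (f : (Fin n → Bool) → Bool) : ℕ := Finset.univ.sup (sx f)

/-- coordinate `i` is relevant for `f`. -/
def Rel {n : ℕ} (i : Fin n) (f : (Fin n → Bool) → Bool) : Prop :=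
  ∃ x, f (flip1 x i) ≠ f x

/-- the set of relevant coordinates of `f`. -/
def relSet {n : ℕ} (f : (Fin n → Bool) → Bool) : Finset (Fin n) :=
  Finset.univ.filter fun i => Rel i f

/-- the number of relevant variables `n(f)`. -/
def nrel {n : ℕ} (f : (Fin n → Bool) → Bool) : ℕ := (relSet f).card

/-- influence of coordinate `i` on `f` (uniform distribution). -/
def infl {n : ℕ} (f : (Fin n → Bool) → Bool) (i : Fin n) : ℝ :=
  ((Finset.univ.filter fun x : Fin n → Bool => f x ≠ f (flip1 x i)).card : ℝ) / 2 ^ n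

/-- total influence `I[f]`. -/
def totalInf {n : ℕ} (f : (Fin n → Bool) → Bool) : ℝ := ∑ i, infl f i

/-- restriction of `f` fixing the coordinates in `H` according to `α`
(viewed as a function on the full cube not depending on the coordinates in `H`). -/
def restrict {n : ℕ} (f : (Fin n → Bool) → Bool) (H : Finset (Fin n))
    (α : Fin n → Bool) : (Fin n → Bool) → Bool :=
  fun x => f (fun i => if i ∈ H then α i else x i)

/-- certificate complexity of `f` at `x`. -/
def certAt {n : ℕ} (f : (Fin n → Bool) → Bool) (x : Fin n → Bool) : ℕ :=
  sInf {k | ∃ S : Finset (Fin n), S.card = k ∧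
    ∀ y, (∀ i ∈ S, y i = x i) → f y = f x}

/-- certificate complexity `C(f)`. -/
def certC {n : ℕ} (f : (Fin n → Bool) → Bool) : ℕ := Finset.univ.sup (certAt f)

/-- `f` is in standard form: `f(0) = 0` and `f(e_i) = 1` for every basis vector. -/
def stdForm {b : ℕ} (f : (Fin b → Bool) → Bool) : Prop :=
  f (fun _ => false) = false ∧ ∀ i : Fin b, f (fun j => decide (j = i)) = true

end

end BF

open BF

/-- the univariate polynomial `p_f(μ)` obtained by substituting `x_i = μ` for all `i`
into the multilinear expansion of `f`. -/
noncomputable def pf {b : ℕ} (f : (Fin b → Bool) → Bool) : Polynomial ℝ :=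
  ∑ S : Finset (Fin b),
    Polynomial.C (coeffS (fun x => bval (f x)) S) * Polynomial.X ^ S.card

section AuxLemmas

lemma aux_sum_pow_card {α : Type*} [DecidableEq α] (s : Finset α) (r : ℝ) :
    ∑ t ∈ s.powerset, r ^ t.card = (r + 1) ^ s.card := by
  have h := Finset.prod_add (fun _ : α => r) (fun _ : α => 1) s
  simp only [Finset.prod_const, Finset.prod_const_one, mul_one] at h
  simpa using h.symm

lemma aux_inner_sum {b : ℕ} (T : Finset (Fin b)) (μ : ℝ) :
    ∑ S : Finset (Fin b), (if T ⊆ S then (-1:ℝ)^(S.card - T.card) * μ^S.card else 0)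
      = μ^T.card * (1-μ)^(b - T.card) := by
  classical
  rw [← Finset.sum_filter]
  have := Finset.sum_nbij' (i := fun S => S \ T) (j := fun U => T ∪ U)
    (s := Finset.univ.filter (fun S => T ⊆ S)) (t := Tᶜ.powerset)
    (f := fun S => (-1:ℝ)^(S.card - T.card) * μ^S.card)
    (g := fun U => (-μ)^U.card * μ^T.card)
    (by intro S hS; simp only [Finset.mem_filter] at hS
        simp only [Finset.mem_powerset]
        intro x hx; simp only [Finset.mem_sdiff] at hx; simp [hx.2])
    (by intro U hU; simp)
    (by intro S hS; simp only [Finset.mem_filter] at hS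
        exact Finset.union_sdiff_of_subset hS.2)
    (by intro U hU; simp only [Finset.mem_powerset] at hU
        refine Finset.union_sdiff_cancel_left ?_
        exact Finset.disjoint_left.mpr (fun x hxT hxU => by
          have := hU hxU; simp at this; exact this hxT))
    (by intro S hS; simp only [Finset.mem_filter] at hS
        obtain ⟨k, hk⟩ : ∃ k, S.card = T.card + k := ⟨S.card - T.card, by
          have := Finset.card_le_card hS.2; omega⟩
        rw [Finset.card_sdiff_of_subset hS.2, hk]
        have h2 : T.card + k - T.card = k := by omega
        rw [h2, pow_add, neg_pow]
        ring)
  rw [this]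
  rw [← Finset.sum_mul, aux_sum_pow_card, Finset.card_compl, Fintype.card_fin]
  ring_nf

lemma aux_eval_pf {b : ℕ} (f : (Fin b → Bool) → Bool) (μ : ℝ) :
    (pf f).eval μ = ∑ T : Finset (Fin b),
      bval (f (fun i => decide (i ∈ T))) * (μ^T.card * (1-μ)^(b - T.card)) := by
  classical
  simp only [pf, Polynomial.eval_finset_sum, Polynomial.eval_mul, Polynomial.eval_C,
    Polynomial.eval_pow, Polynomial.eval_X, coeffS, Finset.sum_mul]
  have hps : ∀ S : Finset (Fin b), S.powerset = Finset.univ.filter (fun T => T ⊆ S) := by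
    intro S; ext T; simp
  calc ∑ S : Finset (Fin b), ∑ T ∈ S.powerset,
        (-1:ℝ)^(S.card - T.card) * bval (f (fun i => decide (i ∈ T))) * μ^S.card
      = ∑ S : Finset (Fin b), ∑ T : Finset (Fin b),
        (if T ⊆ S then (-1:ℝ)^(S.card - T.card) * bval (f (fun i => decide (i ∈ T))) * μ^S.card
         else 0) := by
        refine Finset.sum_congr rfl fun S _ => ?_
        rw [hps S, Finset.sum_filter]
    _ = ∑ T : Finset (Fin b), ∑ S : Finset (Fin b),
        (if T ⊆ S then (-1:ℝ)^(S.card - T.card) * bval (f (fun i => decide (i ∈ T))) * μ^S.card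
         else 0) := Finset.sum_comm
    _ = ∑ T : Finset (Fin b),
        bval (f (fun i => decide (i ∈ T))) * (μ^T.card * (1-μ)^(b - T.card)) := by
        refine Finset.sum_congr rfl fun T _ => ?_
        rw [← aux_inner_sum T μ, Finset.mul_sum]
        refine Finset.sum_congr rfl fun S _ => ?_
        split
        · ring
        · rw [mul_zero]

lemma aux_sum_one {b : ℕ} (μ : ℝ) :
    ∑ T : Finset (Fin b), μ^T.card * (1-μ)^(b - T.card) = 1 := by
  classical
  have h := Finset.prod_add (fun _ : Fin b => μ) (fun _ : Fin b => (1-μ)) Finset.univ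
  simp only [Finset.prod_const, Finset.powerset_univ] at h
  have h2 : ∀ T : Finset (Fin b), (Finset.univ \ T).card = b - T.card := by
    intro T
    rw [← Finset.compl_eq_univ_sdiff, Finset.card_compl, Fintype.card_fin]
  rw [Finset.sum_congr rfl (fun T _ => by rw [h2 T])] at h
  have : (μ + (1 - μ)) = 1 := by ring
  rw [this] at h
  simpa using h.symm

lemma aux_bval_nonneg (x : Bool) : 0 ≤ bval x := by unfold bval; split <;> norm_num

lemma aux_bval_le_one (x : Bool) : bval x ≤ 1 := by unfold bval; split <;> norm_num

end AuxLemmas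

lemma aux_coeffS_pair {b : ℕ} (f : (Fin b → Bool) → Bool) (hf : stdForm f)
    (S : Finset (Fin b)) (hS : S.card = 2) :
    coeffS (fun x => bval (f x)) S = bval (f (fun i => decide (i ∈ S))) - 2 := by
  classical
  obtain ⟨i, j, hij, rfl⟩ := Finset.card_eq_two.mp hS
  have hi : i ∉ ({j} : Finset (Fin b)) := by simp [hij]
  unfold coeffS
  have hpj : ({j} : Finset (Fin b)).powerset = {∅, {j}} := by
    ext t; simp [Finset.subset_singleton_iff]
  rw [show ({i, j} : Finset (Fin b)) = insert i {j} from rfl,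
    Finset.sum_powerset_insert hi, hpj,
    Finset.sum_pair (Finset.singleton_ne_empty j).symm,
    Finset.sum_pair (Finset.singleton_ne_empty j).symm]
  have hc : (insert i {j} : Finset (Fin b)).card = 2 := hS
  have h0 : (fun k : Fin b => decide (k ∈ (∅ : Finset (Fin b)))) = fun _ => false := by
    funext k; simp
  have hj : (fun k : Fin b => decide (k ∈ ({j} : Finset (Fin b)))) = fun k => decide (k = j) := by
    funext k; simp
  have hii : (fun k : Fin b => decide (k ∈ insert i (∅ : Finset (Fin b))))
      = fun k => decide (k = i) := by funext k; simp
  rw [hc, h0, hj, hii]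
  simp only [hf.1, hf.2 j, hf.2 i, bval, if_true, if_false, Finset.card_empty,
    Finset.card_singleton, LawfulSingleton.insert_empty_eq, Finset.card_insert_of_notMem hi]
  norm_num
  ring

lemma aux_coeff_two {b : ℕ} (f : (Fin b → Bool) → Bool) :
    (pf f).coeff 2 = ∑ S ∈ Finset.univ.filter (fun S : Finset (Fin b) => S.card = 2),
      coeffS (fun x => bval (f x)) S := by
  classical
  simp only [pf, Polynomial.finset_sum_coeff, Polynomial.coeff_C_mul, Polynomial.coeff_X_pow,
    mul_ite, mul_one, mul_zero]
  rw [← Finset.sum_filter]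
  refine Finset.sum_congr ?_ fun _ _ => rfl
  ext S; simp [eq_comm]

/-- if `f` is in standard form then (1) `deg p_f ≤ deg f`,
(2) `0 ≤ p_f(μ) ≤ 1` on `[0,1]`, and (3) `|p_f''(0)| ≥ b(b-1)`. -/
theorem stmt2 {b : ℕ} (f : (Fin b → Bool) → Bool) (hf : stdForm f) :
    (pf f).natDegree ≤ degB f ∧
    (∀ μ ∈ Set.Icc (0 : ℝ) 1, 0 ≤ (pf f).eval μ ∧ (pf f).eval μ ≤ 1) ∧
    (b : ℝ) * ((b : ℝ) - 1) ≤
      |(Polynomial.derivative (Polynomial.derivative (pf f))).eval 0| := by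
  classical
  refine ⟨?_, ?_, ?_⟩
  · -- degree bound
    refine Polynomial.natDegree_sum_le_of_forall_le _ _ fun S _ => ?_
    by_cases h : coeffS (fun x => bval (f x)) S = 0
    · simp [h]
    · have hmem : S ∈ Finset.univ.filter
          (fun S : Finset (Fin b) => coeffS (fun x => bval (f x)) S ≠ 0) :=
        Finset.mem_filter.mpr ⟨Finset.mem_univ _, h⟩
      refine le_trans (Polynomial.natDegree_C_mul_X_pow_le _ _) ?_
      exact Finset.le_sup (f := Finset.card) hmem
  · -- values in [0,1]
    intro μ hμ
    obtain ⟨h0, h1⟩ := hμ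
    rw [aux_eval_pf]
    have h1' : (0:ℝ) ≤ 1 - μ := by linarith
    constructor
    · refine Finset.sum_nonneg fun T _ => ?_
      exact mul_nonneg (aux_bval_nonneg _)
        (mul_nonneg (pow_nonneg h0 _) (pow_nonneg h1' _))
    · calc ∑ T : Finset (Fin b),
            bval (f (fun i => decide (i ∈ T))) * (μ^T.card * (1-μ)^(b - T.card))
          ≤ ∑ T : Finset (Fin b), μ^T.card * (1-μ)^(b - T.card) := by
            refine Finset.sum_le_sum fun T _ => ?_
            have h2 := aux_bval_le_one (f (fun i => decide (i ∈ T)))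
            have h3 : 0 ≤ μ^T.card * (1-μ)^(b - T.card) :=
              mul_nonneg (pow_nonneg h0 _) (pow_nonneg h1' _)
            nlinarith
        _ = 1 := aux_sum_one μ
  · -- second derivative
    set K := Finset.univ.filter (fun S : Finset (Fin b) => S.card = 2) with hK
    have hKcard : K.card = b.choose 2 := by
      have : K = Finset.powersetCard 2 (Finset.univ : Finset (Fin b)) := by
        ext S; simp [hK, Finset.mem_powersetCard]
      rw [this, Finset.card_powersetCard, Finset.card_univ, Fintype.card_fin]
    have heval : (Polynomial.derivative (Polynomial.derivative (pf f))).eval 0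
        = (pf f).coeff 2 * 2 := by
      rw [← Polynomial.coeff_zero_eq_eval_zero, Polynomial.coeff_derivative,
        Polynomial.coeff_derivative]
      norm_num
    have hle : (pf f).coeff 2 ≤ -(K.card : ℝ) := by
      rw [aux_coeff_two]
      calc ∑ S ∈ K, coeffS (fun x => bval (f x)) S ≤ ∑ _S ∈ K, (-1 : ℝ) := by
            refine Finset.sum_le_sum fun S hS => ?_
            rw [aux_coeffS_pair f hf S (by simpa [hK] using hS)]
            have := aux_bval_le_one (f (fun i => decide (i ∈ S)))
            linarith
        _ = -(K.card : ℝ) := by simp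
    have habs : (K.card : ℝ) ≤ |(pf f).coeff 2| :=
      le_abs.mpr (Or.inr (by linarith))
    rw [heval, abs_mul]
    have hfin : (b : ℝ) * ((b : ℝ) - 1) ≤ (K.card : ℝ) * 2 := by
      rcases Nat.eq_zero_or_pos b with hb | hb
      · subst hb; simp [hKcard]
      · have h2 : b.choose 2 * 2 = b * (b - 1) := by
          rw [Nat.choose_two_right]
          have he : 2 ∣ b * (b - 1) := by
            have := Nat.even_mul_succ_self (b - 1)
            have hb1 : b - 1 + 1 = b := by omega
            rw [hb1] at this
            rw [mul_comm]
            exact this.two_dvd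
          omega
        have : (b : ℝ) * ((b : ℝ) - 1) = ((b * (b - 1) : ℕ) : ℝ) := by
          push_cast [Nat.cast_sub hb]
          ring
        rw [this, hKcard, ← h2]
        push_cast
        norm_num
    calc (b : ℝ) * ((b : ℝ) - 1) ≤ (K.card : ℝ) * 2 := hfin
      _ ≤ |(pf f).coeff 2| * |(2 : ℝ)| := by
          rw [abs_two]
          nlinarith [habs, Nat.cast_nonneg (α := ℝ) K.card]
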